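/- Let g be an antagonistic game with players a and b (colors in a finite set C) such that: (1) for every one-player game for b (with colors in C and preference the inverse of ≺_a) there exists m ∈ ℕ such that b wins her winnable future threshold games in it using uniformly finite memory m; (2) there exists m' ∈ ℕ such that a wins her winnable future threshold games in g using uniformly finite memory m'; (3) ≺_a has the weak OIR property. Then player a has the optimality-is-regular property in g: for every finite-memory strategy s_a of a there is a deterministic finite automaton deciding, on input a history h, whether s_a is optimal at h. -/

import Mathlib

namespace GG

variable {V C A : Type}

/-- Append a finite list in front of an infinite sequence. -/
def appSeq (l : List V) (ρ : ℕ → V) : ℕ → V :=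
  fun n => if n < l.length then l.getD n (ρ 0) else ρ (n - l.length)

/-- Glue two histories, identifying the last vertex of `l` with the first of `l'`. -/
def glueL (l l' : List V) : List V := l.dropLast ++ l'

/-- Glue a history with a run, identifying the last vertex of `l` with the start of `ρ`. -/
def glueR (l : List V) (ρ : ℕ → V) : ℕ → V := appSeq l.dropLast ρ

/-- Ultimately periodic (regular) sequence. -/
def UltPeriodic (ρ : ℕ → V) : Prop := ∃ k p : ℕ, 0 < p ∧ ∀ n, k ≤ n → ρ (n + p) = ρ n

/-- Strict weak order: irreflexive, transitive, with transitive incomparability. -/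
def SWO (r : (ℕ → C) → (ℕ → C) → Prop) : Prop :=
  (∀ x, ¬ r x x) ∧ (∀ x y z, r x y → r y z → r x z) ∧
    (∀ x y z, ¬ r x y → ¬ r y z → ¬ r x z)

/-- A strategy uses `m` bits of memory: it is induced by a strategic update
`σ : V × {0,1}^m → V × {0,1}^m` together with an initial memory content. -/
def UsesMem (m : ℕ) (s : List V → V) : Prop :=
  ∃ (σ : V × (Fin m → Bool) → V × (Fin m → Bool)) (M₀ : Fin m → Bool),
    ∀ (l : List V) (v : V),
      s (l ++ [v]) = (σ (v, l.foldl (fun M u => (σ (u, M)).2) M₀)).1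

/-- A finite-memory strategy. -/
def FinMem (s : List V → V) : Prop := ∃ m, UsesMem m s

/-- Regular language: recognized by a deterministic finite automaton. -/
def RegLang {α : Type} (L : Set (List α)) : Prop :=
  ∃ (Q : Type) (_ : Fintype Q) (step : Q → α → Q) (init : Q) (acc : Set Q),
    ∀ w : List α, w ∈ L ↔ w.foldl step init ∈ acc

/-- Repeat a finite word `n` times. -/
def repW (l : List C) (n : ℕ) : List C := (List.replicate n l).flatten

/-- The infinite word `u · w^ω` (with default letter `d`, unused when `w ≠ []`). -/
def extWord (d : C) (u w : List C) : ℕ → C := fun n =>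
  if n < u.length then u.getD n d else w.getD ((n - u.length) % w.length) d

/-- The regular-Mont condition for a preference on infinite color sequences. -/
def RegularMont (prec : (ℕ → C) → (ℕ → C) → Prop) : Prop :=
  ∀ (d : C) (h₀ h₁ h₂ h₃ : List C), h₁ ≠ [] → h₃ ≠ [] →
    (∀ n : ℕ, prec (extWord d (h₀ ++ repW h₁ n ++ h₂) h₃)
        (extWord d (h₀ ++ repW h₁ (n + 1) ++ h₂) h₃)) →
    prec (extWord d (h₀ ++ h₂) h₃) (extWord d h₀ h₁)

/-- The weak optimality-is-regular property of a preference. -/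
def WeakOIR (prec : (ℕ → C) → (ℕ → C) → Prop) : Prop :=
  ∀ p q : ℕ → C, UltPeriodic p → UltPeriodic q →
    ∃ M : Set (List C), RegLang M ∧ ∀ h : List C, h ∈ M ↔ prec (appSeq h p) (appSeq h q)

/-- Automatic-piecewise prefix-linearity of a preference on `C^ω` (word level). -/
def APPLword (prec : (ℕ → C) → (ℕ → C) → Prop) : Prop :=
  ∃ (Q : Type) (_ : Fintype Q) (step : Q → C → Q) (init : Q),
    ∀ h h' : List C, h.foldl step init = h'.foldl step init →
      ∀ p q : ℕ → C,
        (prec (appSeq h p) (appSeq h q) ↔ prec (appSeq h' p) (appSeq h' q))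

/-- A multi-player game played on a finite directed graph in which every
vertex has an outgoing edge. Players compare runs via color traces. -/
structure Game (V C A : Type) where
  edge : V → V → Prop
  serial : ∀ v, ∃ w, edge v w
  start : V
  owner : V → A
  color : V → C
  pref : A → (ℕ → C) → (ℕ → C) → Prop

/-- Shifted strategy `s^h`. -/
def shiftStrat (l : List V) (s : List V → V) : List V → V :=
  fun l' => s (l.dropLast ++ l')

namespace Game

variable (g : Game V C A)

def lastV (l : List V) : V := l.getLast?.getD g.start

/-- Histories: finite paths starting at the start vertex. -/
def IsHist (l : List V) : Prop :=
  l ≠ [] ∧ l.head? = some g.start ∧ l.Chain' g.edge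

/-- Runs: infinite paths starting at the start vertex. -/
def IsRun (ρ : ℕ → V) : Prop :=
  ρ 0 = g.start ∧ ∀ n, g.edge (ρ n) (ρ (n + 1))

/-- Runs are compared via their color traces. -/
def runPref (a : A) (ρ ρ' : ℕ → V) : Prop :=
  g.pref a (fun n => g.color (ρ n)) (fun n => g.color (ρ' n))

/-- Validity of a strategy on the set `P` of controlled vertices. -/
def ValidOn (P : V → Prop) (s : List V → V) : Prop :=
  ∀ l, g.IsHist l → P (g.lastV l) → g.edge (g.lastV l) (s l)

def ValidStrat (a : A) (s : List V → V) : Prop :=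
  g.ValidOn (fun v => g.owner v = a) s

/-- Validity for the coalition of all players other than `a`. -/
def ValidCo (a : A) (s : List V → V) : Prop :=
  g.ValidOn (fun v => g.owner v ≠ a) s

def _root_.GG.histUpTo (ρ : ℕ → V) (n : ℕ) : List V := (List.range (n + 1)).map ρ

def _root_.GG.CompatOn (P : V → Prop) (s : List V → V) (ρ : ℕ → V) : Prop :=
  ∀ n, P (ρ n) → ρ (n + 1) = s (GG.histUpTo ρ n)

/-- A run is compatible with a strategy of player `a`. -/
def Compat (a : A) (s : List V → V) (ρ : ℕ → V) : Prop :=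
  GG.CompatOn (fun v => g.owner v = a) s ρ

def CompatCo (a : A) (s : List V → V) (ρ : ℕ → V) : Prop :=
  GG.CompatOn (fun v => g.owner v ≠ a) s ρ

/-- `s` is a winning strategy of Player 1 (= player `a`) in the threshold game
`g_{a,ρ}`: every compatible run is strictly preferred to `ρ`. -/
def Wins1 (a : A) (ρ : ℕ → V) (s : List V → V) : Prop :=
  g.ValidStrat a s ∧ ∀ ρ', g.IsRun ρ' → g.Compat a s ρ' → g.runPref a ρ ρ'

/-- `s` is a winning strategy of Player 2 (the coalition) in the threshold game `g_{a,ρ}`. -/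
def Wins2 (a : A) (ρ : ℕ → V) (s : List V → V) : Prop :=
  g.ValidCo a s ∧ ∀ ρ', g.IsRun ρ' → g.CompatCo a s ρ' → ¬ g.runPref a ρ ρ'

/-- Player 1 wins the non-strict threshold game for `a` and `ρ` with `s`. -/
def Wins1NS (a : A) (ρ : ℕ → V) (s : List V → V) : Prop :=
  g.ValidStrat a s ∧ ∀ ρ', g.IsRun ρ' → g.Compat a s ρ' → ¬ g.runPref a ρ' ρ

/-- Player 2 wins the non-strict threshold game for `a` and `ρ` with `s`. -/
def Wins2NS (a : A) (ρ : ℕ → V) (s : List V → V) : Prop :=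
  g.ValidCo a s ∧ ∀ ρ', g.IsRun ρ' → g.CompatCo a s ρ' → g.runPref a ρ' ρ

/-- The future game `g^h` after history `l`. -/
def future (l : List V) : Game V C A where
  edge := g.edge
  serial := g.serial
  start := g.lastV l
  owner := g.owner
  color := g.color
  pref := fun a p q =>
    g.pref a (appSeq (l.dropLast.map g.color) p) (appSeq (l.dropLast.map g.color) q)

/-- The guarantee `γ_a(s)` of a strategy. -/
def gam (a : A) (s : List V → V) : Set (ℕ → V) :=
  {ρ | g.IsRun ρ ∧ ∃ ρ', g.IsRun ρ' ∧ g.Compat a s ρ' ∧ ¬ g.runPref a ρ ρ'}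

/-- The best guarantee `Γ_a`. -/
def Gam (a : A) : Set (ℕ → V) :=
  ⋂ s ∈ {s : List V → V | g.ValidStrat a s}, g.gam a s

def Optimal (a : A) (s : List V → V) : Prop := g.gam a s = g.Gam a

def OptimalAt (a : A) (s : List V → V) (l : List V) : Prop :=
  (g.future l).Optimal a (shiftStrat l s)

def SubgameOptimal (a : A) (s : List V → V) : Prop :=
  ∀ l, g.IsHist l → g.OptimalAt a s l

/-- A history is compatible with a strategy of player `a`. -/
def HistCompat (a : A) (s : List V → V) (l : List V) : Prop :=
  ∀ i : ℕ, i + 1 < l.length → g.owner (l.getD i g.start) = a →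
    l.getD (i + 1) g.start = s (l.take (i + 1))

def ConsistentOptimal (a : A) (s : List V → V) : Prop :=
  ∀ l, g.IsHist l → g.HistCompat a s l → g.OptimalAt a s l

/-- The history of the play induced by a strategy profile, up to stage `n`. -/
def playHist (prof : A → List V → V) : ℕ → List V
  | 0 => [g.start]
  | n + 1 =>
      playHist prof n ++
        [prof (g.owner (g.lastV (playHist prof n))) (playHist prof n)]

/-- The run induced by a strategy profile. -/
def play (prof : A → List V → V) : ℕ → V := fun n => g.lastV (g.playHist prof n)

/-- Nash equilibrium. -/
def IsNash [DecidableEq A] (prof : A → List V → V) : Prop :=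
  (∀ a, g.ValidStrat a (prof a)) ∧
    ∀ a s', g.ValidStrat a s' →
      ¬ g.runPref a (g.play prof) (g.play (Function.update prof a s'))

/-- Optimality of the strategy `s` of player `a` is regular using `D` bits. -/
def OptRegBits (a : A) (s : List V → V) (D : ℕ) : Prop :=
  ∃ (Q : Type) (_ : Fintype Q) (step : Q → V → Q) (init : Q) (acc : Set Q),
    Fintype.card Q ≤ 2 ^ D ∧
      ∀ l, g.IsHist l → (l.foldl step init ∈ acc ↔ g.OptimalAt a s l)

/-- Player `a` has the optimality-is-regular property in `g`. -/
def OIR (a : A) : Prop :=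
  ∀ s, g.ValidStrat a s → FinMem s →
    ∃ (Q : Type) (_ : Fintype Q) (step : Q → V → Q) (init : Q) (acc : Set Q),
      ∀ l, g.IsHist l → (l.foldl step init ∈ acc ↔ g.OptimalAt a s l)

/-- The two-player antagonistic game associated to player `a`: Player `true`
controls `V_a` with preference `≺_a`, Player `false` the remaining vertices
with the inverse preference. -/
def anta [DecidableEq A] (a : A) : Game V C Bool where
  edge := g.edge
  serial := g.serial
  start := g.start
  owner := fun v => decide (g.owner v = a)
  color := g.color
  pref := fun p x y => if p = true then g.pref a x y else g.pref a y x

/-- The cumulative glued histories `h₀⌢h₁⌢…⌢h_n`. -/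
def _root_.GG.cumul (h₀ : List V) (hs : ℕ → List V) : ℕ → List V
  | 0 => h₀
  | n + 1 => glueL (GG.cumul h₀ hs n) (hs n)

/-- The preference of player `a` is Mont in `g`. -/
def MontPref (a : A) : Prop :=
  ∀ (h₀ : List V) (ρ : ℕ → V) (hs : ℕ → List V),
    g.IsHist h₀ → UltPeriodic ρ →
    (∀ n, g.IsRun (glueR (GG.cumul h₀ hs n) ρ)) →
    (∀ n, g.runPref a (glueR (GG.cumul h₀ hs n) ρ) (glueR (GG.cumul h₀ hs (n + 1)) ρ)) →
    ∀ lim : ℕ → V,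
      (∀ n k, k < (GG.cumul h₀ hs n).dropLast.length →
        lim k = (GG.cumul h₀ hs n).dropLast.getD k g.start) →
      (∀ N, ∃ n, N < (GG.cumul h₀ hs n).dropLast.length) →
      g.runPref a (glueR h₀ ρ) lim

/-- Player `a`'s preference is automatic-piecewise prefix-linear in `g`. -/
def APPLin (a : A) : Prop :=
  ∃ (Q : Type) (_ : Fintype Q) (step : Q → V → Q) (init : Q),
    ∀ h h', g.IsHist h → g.IsHist h' →
      h.foldl step init = h'.foldl step init →
      g.lastV h = g.lastV h' ∧
        ∀ ρ ρ' : ℕ → V,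
          g.IsRun (glueR h ρ) → g.IsRun (glueR h ρ') →
          g.IsRun (glueR h' ρ) → g.IsRun (glueR h' ρ') →
          (g.runPref a (glueR h ρ) (glueR h ρ') ↔ g.runPref a (glueR h' ρ) (glueR h' ρ'))

end Game

end GG

open GG
open Fin.NatCast
namespace Prf

open GG List

variable {V C : Type}

/-- Color trace of a run. -/
def colors (g : Game V C Bool) (ρ : ℕ → V) : ℕ → C := fun n => g.color (ρ n)

/-- `x` is strictly below `y` for player `true`, after prefix of colors `h`. -/
def plt (g : Game V C Bool) (h : List C) (x y : ℕ → V) : Prop :=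
  g.pref true (appSeq h (colors g x)) (appSeq h (colors g y))

/-- Memory update function induced by a strategic update. -/
def updF {Mm : Type} (σ : V × Mm → V × Mm) : Mm → V → Mm := fun M v => (σ (v, M)).2

/-- Memory content after `n` steps of a run. -/
def memRun {Mm : Type} (σ : V × Mm → V × Mm) (M : Mm) (ρ : ℕ → V) (n : ℕ) : Mm :=
  ((List.range n).map ρ).foldl (updF σ) M

/-- A run from `v₀` that follows the strategic update `σ` (with initial memory `M`)
at `true`-vertices and follows edges at `false`-vertices. -/
def Forced (g : Game V C Bool) {Mm : Type} (σ : V × Mm → V × Mm) (M : Mm) (v₀ : V)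
    (ρ : ℕ → V) : Prop :=
  ρ 0 = v₀ ∧ ∀ n, (g.owner (ρ n) = true → ρ (n + 1) = (σ (ρ n, memRun σ M ρ n)).1)
    ∧ (g.owner (ρ n) = false → g.edge (ρ n) (ρ (n + 1)))

/-- Ultimately periodic with preperiod + period at most `K`. -/
def UltPerK (K : ℕ) (ρ : ℕ → V) : Prop :=
  ∃ k p : ℕ, 0 < p ∧ k + p ≤ K ∧ ∀ n, k ≤ n → ρ (n + p) = ρ n

lemma UltPerK.mono {K K' : ℕ} {ρ : ℕ → V} (hK : K ≤ K') (h : UltPerK K ρ) : UltPerK K' ρ := by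
  obtain ⟨k, p, hp, hkp, hper⟩ := h
  exact ⟨k, p, hp, hkp.trans hK, hper⟩

/- ### list lemmas -/

lemma histUpTo_zero (ρ : ℕ → V) : histUpTo ρ 0 = [ρ 0] := rfl

lemma histUpTo_succ (ρ : ℕ → V) (n : ℕ) :
    histUpTo ρ (n + 1) = histUpTo ρ n ++ [ρ (n + 1)] := by
  simp [histUpTo, List.range_succ]

lemma histUpTo_ne (ρ : ℕ → V) (n : ℕ) : histUpTo ρ n ≠ [] := by
  cases n with
  | zero => simp [histUpTo_zero]
  | succ n => simp [histUpTo_succ]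

lemma histUpTo_length (ρ : ℕ → V) (n : ℕ) : (histUpTo ρ n).length = n + 1 := by
  simp [histUpTo]

lemma histUpTo_head (ρ : ℕ → V) (n : ℕ) : (histUpTo ρ n).head? = some (ρ 0) := by
  induction n with
  | zero => rfl
  | succ n ih => rw [histUpTo_succ, List.head?_append_of_ne_nil _ (histUpTo_ne ρ n)]; exact ih

lemma histUpTo_getLast? (ρ : ℕ → V) (n : ℕ) : (histUpTo ρ n).getLast? = some (ρ n) := by
  cases n with
  | zero => rfl
  | succ n => rw [histUpTo_succ, List.getLast?_concat]

lemma histUpTo_dropLast (ρ : ℕ → V) (n : ℕ) :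
    (histUpTo ρ n).dropLast = (List.range n).map ρ := by
  cases n with
  | zero => rfl
  | succ n => rw [histUpTo_succ, List.dropLast_concat]; rfl

lemma histUpTo_chain' (R : V → V → Prop) (ρ : ℕ → V) (n : ℕ)
    (h : ∀ k, k < n → R (ρ k) (ρ (k + 1))) : (histUpTo ρ n).Chain' R := by
  rw [histUpTo, List.Chain', List.isChain_map]
  exact (List.isChain_range_succ _ _).2 h

lemma memRun_succ {Mm : Type} (σ : V × Mm → V × Mm) (M : Mm) (ρ : ℕ → V) (n : ℕ) :
    memRun σ M ρ (n + 1) = updF σ (memRun σ M ρ n) (ρ n) := by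
  simp [memRun, List.range_succ]

end Prf
namespace Prf

open GG List

variable {V C : Type}

/- ### deterministic sequences in a finite type are ultimately periodic -/

lemma det_ultPerK {X : Type} [Fintype X] (F : X → X) (st : ℕ → X)
    (hdet : ∀ n, st (n + 1) = F (st n)) :
    ∃ k p : ℕ, 0 < p ∧ k + p ≤ Fintype.card X ∧ ∀ n, k ≤ n → st (n + p) = st n := by
  have hcard : Fintype.card (Fin (Fintype.card X + 1)) > Fintype.card X := by simp
  obtain ⟨i, j, hne, heq⟩ := Fintype.exists_ne_map_eq_of_card_lt
    (fun i : Fin (Fintype.card X + 1) => st i) hcard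
  -- wlog i < j
  rcases lt_or_gt_of_ne hne with hlt | hlt
  case _ =>
    refine ⟨i, j - i, by omega, by omega, ?_⟩
    have key : ∀ m, st ((i : ℕ) + m) = st ((j : ℕ) + m) := by
      intro m
      induction m with
      | zero => simpa using heq
      | succ m ih => rw [← Nat.add_assoc, ← Nat.add_assoc, hdet, hdet, ih]
    intro n hn
    have : n = (i : ℕ) + (n - i) := by omega
    rw [this, key (n - i)]
    congr 1
    omega
  case _ =>
    refine ⟨j, i - j, by omega, by omega, ?_⟩
    have key : ∀ m, st ((j : ℕ) + m) = st ((i : ℕ) + m) := by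
      intro m
      induction m with
      | zero => simpa using heq.symm
      | succ m ih => rw [← Nat.add_assoc, ← Nat.add_assoc, hdet, hdet, ih]
    intro n hn
    have : n = (j : ℕ) + (n - j) := by omega
    rw [this, key (n - j)]
    congr 1
    omega

/- ### minimal elements of finite sets for transitive irreflexive relations -/

lemma exists_minimal {α : Type} (r : α → α → Prop)
    (hirr : ∀ x, ¬ r x x) (htr : ∀ x y z, r x y → r y z → r x z)
    (S : Set α) (hfin : S.Finite) (hne : S.Nonempty) :
    ∃ m ∈ S, ∀ x ∈ S, ¬ r x m := by
  by_contra hcon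
  push_neg at hcon
  obtain ⟨x₀, hx₀⟩ := hne
  -- build an infinite strictly descending chain
  have hstep : ∀ x ∈ S, ∃ y, y ∈ S ∧ r y x := fun x hx => by
    obtain ⟨y, hy, hr⟩ := hcon x hx; exact ⟨y, hy, hr⟩
  let f : ℕ → {x // x ∈ S} := fun n => Nat.rec ⟨x₀, hx₀⟩
    (fun _ p => ⟨(hstep p.1 p.2).choose, (hstep p.1 p.2).choose_spec.1⟩) n
  have hf : ∀ n, r (f (n + 1)).1 (f n).1 := fun n => (hstep (f n).1 (f n).2).choose_spec.2
  have hchain : ∀ i j, i < j → r (f j).1 (f i).1 := by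
    intro i j hij
    induction hij with
    | refl => exact hf i
    | step h ih => exact htr _ _ _ (hf _) ih
  have hinj : Function.Injective fun n => (f n).1 := by
    intro i j hij
    simp only at hij
    by_contra hne2
    rcases lt_or_gt_of_ne hne2 with h | h
    · exact hirr _ (hij ▸ hchain i j h)
    · exact hirr _ (hij ▸ hchain j i h)
  have hrange : Set.range (fun n => (f n).1) ⊆ S := by
    rintro y ⟨n, rfl⟩; exact (f n).2
  have : (Set.range fun n => (f n).1).Infinite := Set.infinite_range_of_injective hinj
  exact this (hfin.subset hrange)

end Prf
namespace Prf

open GG List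

variable {V C : Type}

/-- Parameterization of runs that are ultimately periodic with bound `K`. -/
def phiRun (K : ℕ) (d : (Fin (K + 1) → V) × Fin (K + 1) × Fin (K + 1)) : ℕ → V :=
  fun n =>
    if h : n ≤ K then d.1 ⟨n, by omega⟩
    else d.1 ⟨min ((d.2.1 : ℕ) + (n - (d.2.1 : ℕ)) % (max (d.2.2 : ℕ) 1)) K, by omega⟩

lemma phiRun_ultPeriodic (K : ℕ) (d : (Fin (K + 1) → V) × Fin (K + 1) × Fin (K + 1)) :
    UltPeriodic (phiRun K d) := by
  refine ⟨K + 1, max (d.2.2 : ℕ) 1, by omega, fun n hn => ?_⟩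
  have h1 : ¬ n ≤ K := by omega
  have h2 : ¬ n + max (d.2.2 : ℕ) 1 ≤ K := by omega
  have hk : (d.2.1 : ℕ) ≤ K := by omega
  simp only [phiRun, dif_neg h1, dif_neg h2]
  have heq : n + max (d.2.2 : ℕ) 1 - (d.2.1 : ℕ) = (n - (d.2.1 : ℕ)) + max (d.2.2 : ℕ) 1 := by
    omega
  refine congrArg d.1 (Fin.ext ?_)
  simp only [Fin.mk.injEq]  -- not needed for val goal
  show ((d.2.1 : ℕ) + (n + max (d.2.2 : ℕ) 1 - (d.2.1 : ℕ)) % (max (d.2.2 : ℕ) 1)) ⊓ K =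
    ((d.2.1 : ℕ) + (n - (d.2.1 : ℕ)) % (max (d.2.2 : ℕ) 1)) ⊓ K
  rw [heq, Nat.add_mod_right]

lemma ultPeriodic_comp {W : Type} (f : V → W) {ρ : ℕ → V} (h : UltPeriodic ρ) :
    UltPeriodic (fun n => f (ρ n)) := by
  obtain ⟨k, p, hp, hper⟩ := h
  exact ⟨k, p, hp, fun n hn => congrArg f (hper n hn)⟩

lemma per_mod (ρ : ℕ → V) (k p : ℕ) (hp : 0 < p)
    (hper : ∀ n, k ≤ n → ρ (n + p) = ρ n) :
    ∀ n, k ≤ n → ρ n = ρ (k + (n - k) % p) := by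
  intro n
  induction n using Nat.strong_induction_on with
  | _ n ih =>
    intro hn
    by_cases hlt : n < k + p
    · have : (n - k) % p = n - k := Nat.mod_eq_of_lt (by omega)
      rw [this]
      congr 1
      omega
    · have h1 : ρ n = ρ (n - p) := by
        have := hper (n - p) (by omega)
        rw [Nat.sub_add_cancel (by omega)] at this
        exact this
      rw [h1, ih (n - p) (by omega) (by omega)]
      congr 2
      have : n - k = (n - p - k) + p := by omega
      rw [this, Nat.add_mod_right]

lemma phiRun_surj {K : ℕ} {ρ : ℕ → V} (h : UltPerK K ρ) :
    ∃ d, phiRun K d = ρ := by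
  obtain ⟨k, p, hp, hkp, hper⟩ := h
  refine ⟨⟨fun i => ρ i, ⟨k, by omega⟩, ⟨p, by omega⟩⟩, funext fun n => ?_⟩
  by_cases hn : n ≤ K
  · simp [phiRun, dif_pos hn]
  · have hmax : max p 1 = p := by omega
    have hmod : (n - k) % p < p := Nat.mod_lt _ hp
    have hmin : min (k + (n - k) % p) K = k + (n - k) % p := by omega
    simp only [phiRun, dif_neg hn, hmax, hmin]
    exact (per_mod ρ k p hp hper n (by omega)).symm

end Prf
namespace Prf

open GG List

variable {V C : Type}

section GameLemmas

variable (g : Game V C Bool)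

lemma lastV_of_ne {l : List V} (hne : l ≠ []) : g.lastV l = l.getLast hne := by
  simp [Game.lastV, List.getLast?_eq_getLast hne]

lemma lastV_congr (g' : Game V C Bool) (hcol : g.start = g'.start ∨ True) {l : List V}
    (hne : l ≠ []) : g.lastV l = g'.lastV l := by
  rw [lastV_of_ne g hne, lastV_of_ne g' hne]

lemma lastV_append {l l' : List V} (h : l' ≠ []) : g.lastV (l ++ l') = g.lastV l' := by
  rw [Game.lastV, Game.lastV, List.getLast?_append, List.getLast?_eq_getLast h]
  rfl

lemma head?_dropLast {l : List V} (h : 2 ≤ l.length) : l.dropLast.head? = l.head? := by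
  match l, h with
  | a :: b :: t, _ => simp

lemma isHist_glue {l l' : List V} (hl : g.IsHist l) (h1 : l' ≠ [])
    (h2 : l'.head? = some (g.lastV l)) (h3 : l'.Chain' g.edge) :
    g.IsHist (l.dropLast ++ l') := by
  obtain ⟨hne, hhead, hchain⟩ := hl
  by_cases hd : l.dropLast = []
  · rw [hd, List.nil_append]
    refine ⟨h1, ?_, h3⟩
    have hlen : l.length ≤ 1 := by
      have := List.length_dropLast (xs := l)
      rw [hd] at this
      simp at this
      omega
    obtain ⟨x, rfl⟩ : ∃ x, l = [x] := by
      match l, hne, hlen with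
      | [x], _, _ => exact ⟨x, rfl⟩
    have hx : x = g.start := by simpa using hhead
    have : g.lastV [x] = x := by simp [Game.lastV]
    rw [h2, this, hx]
  · have hlast := List.dropLast_append_getLast hne
    have hchain2 : (l.dropLast ++ [l.getLast hne]).Chain' g.edge := by rw [hlast]; exact hchain
    obtain ⟨c1, _, c3⟩ := List.isChain_append.1 hchain2
    refine ⟨by simp [hd], ?_, ?_⟩
    · rw [List.head?_append_of_ne_nil _ hd]
      have h2len : 2 ≤ l.length := by
        rcases l with _ | ⟨a, _ | ⟨b, t⟩⟩ <;> simp_all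
      rw [head?_dropLast h2len]
      exact hhead
    · rw [List.Chain', List.isChain_append]
      refine ⟨c1, h3, ?_⟩
      intro x hx y hy
      rw [h2] at hy
      rw [lastV_of_ne g hne] at hy
      have := c3 x hx (l.getLast hne) (by simp)
      cases hy
      exact this

lemma future_lastV (l : List V) {l' : List V} (h : l' ≠ []) :
    (g.future l).lastV l' = g.lastV l' := by
  rw [lastV_of_ne _ h, lastV_of_ne _ h]

lemma future_isHist (l : List V) (l' : List V) :
    (g.future l).IsHist l' ↔ l' ≠ [] ∧ l'.head? = some (g.lastV l) ∧ l'.Chain' g.edge :=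
  Iff.rfl

lemma runPref_future (l : List V) (x y : ℕ → V) :
    (g.future l).runPref true x y ↔ plt g (l.dropLast.map g.color) x y := Iff.rfl

/-- Validity of the shifted strategy in the future game. -/
lemma valid_shift {s : List V → V} (hs : g.ValidStrat true s) {l : List V}
    (hl : g.IsHist l) : (g.future l).ValidStrat true (shiftStrat l s) := by
  intro l' hl' hown
  obtain ⟨h1, h2, h3⟩ := (future_isHist g l l').1 hl'
  have hglue := isHist_glue g hl h1 h2 h3
  have hlv : g.lastV (l.dropLast ++ l') = g.lastV l' := lastV_append g h1
  have := hs _ hglue (by rw [hlv, ← future_lastV g l h1]; exact hown)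
  rw [hlv, ← future_lastV g l h1] at this
  exact this

lemma Gam_sub_gam {t : List V → V} (F : Game V C Bool) (ht : F.ValidStrat true t) :
    F.Gam true ⊆ F.gam true t := by
  intro x hx
  exact Set.mem_iInter₂.1 hx t ht

/-- Characterization of non-optimality at a history. -/
lemma notOpt_iff (hswo : SWO (g.pref true)) {s : List V → V} (hs : g.ValidStrat true s)
    {l : List V} (hl : g.IsHist l) :
    ¬ g.OptimalAt true s l ↔
      ∃ ρ', (g.future l).IsRun ρ' ∧ (g.future l).Compat true (shiftStrat l s) ρ' ∧
        ∃ t, (g.future l).Wins1 true ρ' t := by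
  set F := g.future l with hF
  set sh := shiftStrat l s with hsh
  have hvsh : F.ValidStrat true sh := valid_shift g hs hl
  obtain ⟨hirr, htr, hntr⟩ := hswo
  constructor
  · intro hopt
    have hnsub : ¬ F.gam true sh ⊆ F.Gam true := by
      intro hsub
      exact hopt (le_antisymm hsub (Gam_sub_gam F hvsh))
    obtain ⟨ρ, hmem, hnot⟩ := Set.not_subset.1 hnsub
    obtain ⟨hρrun, ρ', hρ'run, hρ'cpt, hnp⟩ := hmem
    simp only [Game.Gam, Set.mem_iInter, Set.mem_setOf_eq, not_forall] at hnot
    obtain ⟨t, ht, hnmem⟩ := hnot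
    have hall : ∀ ρ'', F.IsRun ρ'' → F.Compat true t ρ'' → F.runPref true ρ ρ'' := by
      intro ρ'' h1 h2
      by_contra hcon
      exact hnmem ⟨hρrun, ρ'', h1, h2, hcon⟩
    refine ⟨ρ', hρ'run, hρ'cpt, t, ht, ?_⟩
    intro ρ'' h1 h2
    by_contra hcon
    exact (hntr _ _ _ hnp hcon) (hall ρ'' h1 h2)
  · rintro ⟨ρ', hr, hc, t, hvt, hwin⟩
    intro heq
    have hmem : ρ' ∈ F.gam true sh := ⟨hr, ρ', hr, hc, hirr _⟩
    rw [Game.OptimalAt, Game.Optimal] at heq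
    rw [heq] at hmem
    have hmem2 : ρ' ∈ F.gam true t := Set.mem_iInter₂.1 hmem t hvt
    obtain ⟨_, ρ'', h1, h2, hnp⟩ := hmem2
    exact hnp (hwin ρ'' h1 h2)

end GameLemmas

end Prf
namespace Prf

open GG List

variable {V C : Type}

/-- Projection from the product game's vertices. -/
def projP {Mm : Type} : V ⊕ V × Mm → V := fun x => match x with
  | .inl v => v
  | .inr (v, _) => v

/-- The one-player game for player `false` where `true`-vertices are forced to follow
the strategic update `σ`, preceded by a free copy of the graph to realize arbitrary
history prefixes. -/
def OneP (g : Game V C Bool) {Mm : Type} (σ : V × Mm → V × Mm) : Game (V ⊕ V × Mm) C Bool where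
  edge x y := match x, y with
    | .inl u, .inl w => g.edge u w
    | .inl u, .inr (w, _) => g.edge u w
    | .inr (v, M), .inr (w, M') =>
        M' = (σ (v, M)).2 ∧
          ((g.owner v = true ∧ w = (σ (v, M)).1) ∨ (g.owner v = false ∧ g.edge v w))
    | .inr _, .inl _ => False
  serial := by
    rintro (u | ⟨v, M⟩)
    · obtain ⟨w, hw⟩ := g.serial u
      exact ⟨.inl w, hw⟩
    · cases hov : g.owner v with
      | true => exact ⟨.inr ((σ (v, M)).1, (σ (v, M)).2), rfl, Or.inl ⟨hov, rfl⟩⟩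
      | false =>
        obtain ⟨w, hw⟩ := g.serial v
        exact ⟨.inr (w, (σ (v, M)).2), rfl, Or.inr ⟨hov, hw⟩⟩
  start := .inl g.start
  owner _ := false
  color x := g.color (projP x)
  pref p x y := if p = true then g.pref true x y else g.pref true y x

lemma memRun_zero {Mm : Type} (σ : V × Mm → V × Mm) (M : Mm) (ρ : ℕ → V) :
    memRun σ M ρ 0 = M := rfl

/-- Analysis of runs of the product game that start in the `inr` component. -/
lemma run_inr (g : Game V C Bool) {Mm : Type} (σ : V × Mm → V × Mm) {v₀ : V} {M : Mm}
    {ρt : ℕ → V ⊕ V × Mm} (h0 : ρt 0 = Sum.inr (v₀, M))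
    (hed : ∀ n, (OneP g σ).edge (ρt n) (ρt (n + 1))) :
    (∀ n, ρt n = Sum.inr (projP (ρt n), memRun σ M (fun k => projP (ρt k)) n)) ∧
      Forced g σ M v₀ (fun k => projP (ρt k)) := by
  set ρ : ℕ → V := fun k => projP (ρt k) with hρ
  have hmain : ∀ n, ρt n = Sum.inr (ρ n, memRun σ M ρ n) := by
    intro n
    induction n with
    | zero =>
      have hz : ρ 0 = v₀ := by simp only [hρ]; rw [h0]; rfl
      rw [h0, hz, memRun_zero]
    | succ n ih =>
      have he := hed n
      rw [ih] at he
      cases hrec : ρt (n + 1) with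
      | inl w => rw [hrec] at he; exact he.elim
      | inr p =>
        obtain ⟨w, M'⟩ := p
        rw [hrec] at he
        obtain ⟨hM', _⟩ := he
        have hw : ρ (n + 1) = w := by rw [hρ]; simp only; rw [hrec]; rfl
        rw [memRun_succ, ← hw]
        congr 1
        rw [hM']
        rfl
  constructor
  · exact hmain
  · refine ⟨by rw [hρ]; simp only; rw [h0]; rfl, fun n => ?_⟩
    have he := hed n
    rw [hmain n, hmain (n + 1)] at he
    obtain ⟨_, hor⟩ := he
    constructor
    · intro hown
      rcases hor with ⟨_, hw⟩ | ⟨hfalse, _⟩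
      · rw [← hw]
      · rw [hown] at hfalse; exact Bool.noConfusion hfalse
    · intro hown
      rcases hor with ⟨htrue, _⟩ | ⟨_, hw⟩
      · rw [hown] at htrue; exact Bool.noConfusion htrue
      · exact hw

/-- Lift of a forced run into the product game. -/
lemma forced_lift (g : Game V C Bool) {Mm : Type} (σ : V × Mm → V × Mm) {v₀ : V} {M : Mm}
    {ρ : ℕ → V} (h : Forced g σ M v₀ ρ) :
    (fun n => (Sum.inr (ρ n, memRun σ M ρ n) : V ⊕ V × Mm)) 0 = Sum.inr (v₀, M) ∧
      ∀ n, (OneP g σ).edge (Sum.inr (ρ n, memRun σ M ρ n)) (Sum.inr (ρ (n+1), memRun σ M ρ (n+1))) := by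
  obtain ⟨h0, hstep⟩ := h
  constructor
  · simp only [h0, memRun_zero]
  · intro n
    refine ⟨by rw [memRun_succ]; rfl, ?_⟩
    cases hov : g.owner (ρ n) with
    | true => exact Or.inl ⟨rfl, (hstep n).1 hov⟩
    | false => exact Or.inr ⟨rfl, (hstep n).2 hov⟩

end Prf
namespace Prf

open GG List

variable {V C : Type}

section Play

variable {V₂ : Type} (G₂ : Game V₂ C Bool)

private def prof₁ (s₁ : List V₂ → V₂) : Bool → List V₂ → V₂ := fun _ => s₁

variable (s₁ : List V₂ → V₂)

lemma playHist_isHist (hown : ∀ v, G₂.owner v = false) (hval : G₂.ValidStrat false s₁) : ∀ n, G₂.IsHist (G₂.playHist (prof₁ s₁) n) := by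
  intro n
  induction n with
  | zero =>
    exact ⟨by simp [Game.playHist], by simp [Game.playHist], by simp [Game.playHist, List.Chain', List.isChain_singleton]⟩
  | succ n ih =>
    show G₂.IsHist (G₂.playHist (prof₁ s₁) n ++ [_])
    have hedge := hval _ ih (hown _)
    obtain ⟨hne, hhead, hchain⟩ := ih
    refine ⟨by simp, ?_, ?_⟩
    · rw [List.head?_append_of_ne_nil _ hne]; exact hhead
    · rw [List.Chain', List.isChain_append]
      refine ⟨hchain, List.isChain_singleton _, ?_⟩
      intro x hx y hy
      simp only [List.head?_cons, Option.mem_def, Option.some.injEq] at hy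
      have hx' : G₂.lastV (G₂.playHist (prof₁ s₁) n) = x := by
        rw [Game.lastV, Option.mem_def.1 hx]
        rfl
      rw [← hx', ← hy]
      exact hedge

lemma play_zero : G₂.play (prof₁ s₁) 0 = G₂.start := by
  simp [Game.play, Game.playHist, Game.lastV]

lemma play_succ (n : ℕ) :
    G₂.play (prof₁ s₁) (n + 1) = s₁ (G₂.playHist (prof₁ s₁) n) := by
  show G₂.lastV (G₂.playHist (prof₁ s₁) n ++ [_]) = _
  rw [lastV_append G₂ (by simp)]
  simp [Game.lastV, prof₁]

lemma playHist_eq_histUpTo : ∀ n, G₂.playHist (prof₁ s₁) n = histUpTo (G₂.play (prof₁ s₁)) n := by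
  intro n
  induction n with
  | zero =>
    show [G₂.start] = _
    rw [histUpTo_zero, play_zero]
  | succ n ih =>
    show G₂.playHist (prof₁ s₁) n ++ [_] = _
    rw [histUpTo_succ, ← ih, play_succ]
    rfl

lemma play_isRun (hown : ∀ v, G₂.owner v = false) (hval : G₂.ValidStrat false s₁) : G₂.IsRun (G₂.play (prof₁ s₁)) := by
  refine ⟨play_zero G₂ s₁, fun n => ?_⟩
  rw [play_succ G₂ s₁ n]
  have := hval _ (playHist_isHist G₂ s₁ hown hval n) (hown _)
  have hl : G₂.lastV (G₂.playHist (prof₁ s₁) n) = G₂.play (prof₁ s₁) n := rfl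
  rwa [hl] at this

lemma play_compat : G₂.Compat false s₁ (G₂.play (prof₁ s₁)) := by
  intro n _
  rw [play_succ G₂ s₁ n, playHist_eq_histUpTo]

/-- A finite-memory valid strategy in a one-player game generates an ultimately
periodic run compatible with it. -/
lemma winner_run [Fintype V₂] (hown : ∀ v, G₂.owner v = false) (hval : G₂.ValidStrat false s₁) {m : ℕ} (hmem : UsesMem m s₁) :
    ∃ ρ, G₂.IsRun ρ ∧ G₂.Compat false s₁ ρ ∧
      UltPerK (Fintype.card (V₂ × (Fin m → Bool))) ρ := by
  obtain ⟨σ₁, M₁, hσ₁⟩ := hmem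
  set pl := G₂.play (prof₁ s₁) with hpl
  refine ⟨pl, play_isRun G₂ s₁ hown hval, play_compat G₂ s₁, ?_⟩
  have hstep : ∀ n, pl (n + 1) = (σ₁ (pl n, memRun σ₁ M₁ pl n)).1 := by
    intro n
    rw [hpl, play_succ G₂ s₁ n, playHist_eq_histUpTo]
    have : histUpTo (G₂.play (prof₁ s₁)) n = (List.range n).map (G₂.play (prof₁ s₁)) ++
        [G₂.play (prof₁ s₁) n] := by
      rw [histUpTo, List.range_succ, List.map_append]
      rfl
    rw [this, hσ₁]
    rfl
  set st : ℕ → V₂ × (Fin m → Bool) := fun n => (pl n, memRun σ₁ M₁ pl n) with hst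
  have hdet : ∀ n, st (n + 1) = σ₁ (st n) := by
    intro n
    rw [hst]
    simp only
    rw [memRun_succ, hstep n]
    rfl
  obtain ⟨k, p, hp, hkp, hper⟩ := det_ultPerK σ₁ st hdet
  exact ⟨k, p, hp, hkp, fun n hn => congrArg Prod.fst (hper n hn)⟩

end Play

open Classical in
/-- The positional one-step dynamics following `σ` at `true`-vertices. -/
noncomputable def nextF (g : Game V C Bool) {Mm : Type} (σ : V × Mm → V × Mm)
    (q : V × Mm) : V × Mm :=
  if g.owner q.1 = true then σ q else ((g.serial q.1).choose, (σ q).2)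

/-- A forced ultimately periodic run always exists. -/
lemma starter [Fintype V] (g : Game V C Bool) {Mm : Type} [Fintype Mm]
    (σ : V × Mm → V × Mm) (M : Mm) (v₀ : V) :
    ∃ ρ, Forced g σ M v₀ ρ ∧ UltPerK (Fintype.card (V × Mm)) ρ := by
  classical
  set st : ℕ → V × Mm := fun n => Nat.rec (v₀, M) (fun _ q => nextF g σ q) n with hst
  set ρ : ℕ → V := fun n => (st n).1 with hρ
  have hst0 : st 0 = (v₀, M) := rfl
  have hstS : ∀ n, st (n + 1) = nextF g σ (st n) := fun n => rfl
  have hsnd : ∀ n, (st n).2 = memRun σ M ρ n := by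
    intro n
    induction n with
    | zero => rfl
    | succ n ih =>
      rw [hstS, memRun_succ, ← ih]
      have : (nextF g σ (st n)).2 = (σ (st n)).2 := by
        by_cases h : g.owner (st n).1 = true <;> simp [nextF, h]
      rw [this]
      rfl
  refine ⟨ρ, ⟨rfl, fun n => ?_⟩, ?_⟩
  · constructor
    · intro hown
      have : ρ (n + 1) = (nextF g σ (st n)).1 := rfl
      rw [this]
      have hnf : nextF g σ (st n) = σ (st n) := by
        have hown' : g.owner (st n).1 = true := hown
        simp [nextF, hown']
      rw [hnf, ← hsnd n]
    · intro hown
      have : ρ (n + 1) = (nextF g σ (st n)).1 := rfl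
      rw [this]
      have hnf : nextF g σ (st n) = ((g.serial (st n).1).choose, (σ (st n)).2) := by
        have hown' : g.owner (st n).1 = false := hown
        simp [nextF, hown']
      rw [hnf]
      exact (g.serial (st n).1).choose_spec
  · obtain ⟨k, p, hp, hkp, hper⟩ := det_ultPerK (nextF g σ) st hstS
    exact ⟨k, p, hp, hkp, fun n hn => congrArg Prod.fst (hper n hn)⟩

end Prf
namespace Prf

open GG List

variable {V C : Type}

lemma edge_dropLast (g : Game V C Bool) {l : List V} (hne : l ≠ []) (hchain : l.Chain' g.edge)
    (hd : l.dropLast ≠ []) : g.edge (l.dropLast.getLast hd) (l.getLast hne) := by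
  have h2 := List.dropLast_append_getLast hne
  have hch2 : (l.dropLast ++ [l.getLast hne]).Chain' g.edge := by rw [h2]; exact hchain
  obtain ⟨_, _, c3⟩ := List.isChain_append.1 hch2
  exact c3 _ (by rw [List.getLast?_eq_getLast hd]; rfl) _ rfl

lemma dropLast_ne {l : List V} (h : 2 ≤ l.length) : l.dropLast ≠ [] := by
  have := List.length_dropLast (xs := l)
  intro hc
  rw [hc] at this
  simp at this
  omega

lemma runPref_OneP (g : Game V C Bool) {Mm : Type} (σ : V × Mm → V × Mm)
    (lt : List (V ⊕ V × Mm)) (x y : ℕ → V ⊕ V × Mm) :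
    ((OneP g σ).future lt).runPref false x y ↔
      g.pref true (appSeq (lt.dropLast.map (OneP g σ).color) (fun n => g.color (projP (y n))))
        (appSeq (lt.dropLast.map (OneP g σ).color) (fun n => g.color (projP (x n)))) :=
  Iff.rfl

/-- Main transfer lemma: from hypothesis (1) instantiated at the forced one-player
game, a strict threshold below a forced run that is beatable by a forced run is
beatable by an ultimately periodic forced run with a uniform bound. -/
lemma transfer [Fintype V] (g : Game V C Bool) {Mm : Type} [Fintype Mm]
    (σ : V × Mm → V × Mm) (m : ℕ)
    (H : ∀ l', (OneP g σ).IsHist l' → ∀ ρ, ((OneP g σ).future l').IsRun ρ →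
        (∃ s, ((OneP g σ).future l').Wins1 false ρ s) →
        ∃ s, ((OneP g σ).future l').Wins1 false ρ s ∧ UsesMem m s)
    {l : List V} (hl : g.IsHist l) (hlen : 2 ≤ l.length) (M : Mm) {ρ₀ ρw : ℕ → V}
    (h₀ : Forced g σ M (g.lastV l) ρ₀) (hw : Forced g σ M (g.lastV l) ρw)
    (hplt : plt g (l.dropLast.map g.color) ρw ρ₀) :
    ∃ ρ', Forced g σ M (g.lastV l) ρ' ∧
      UltPerK (Fintype.card ((V ⊕ V × Mm) × (Fin m → Bool))) ρ' ∧
      plt g (l.dropLast.map g.color) ρ' ρ₀ := by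
  classical
  obtain ⟨hne, hhead, hchain⟩ := hl
  set v' : V := g.lastV l with hv'
  set lt : List (V ⊕ V × Mm) := l.dropLast.map Sum.inl ++ [Sum.inr (v', M)] with hlt
  have hdne : l.dropLast ≠ [] := dropLast_ne hlen
  have hmapne : l.dropLast.map (Sum.inl : V → V ⊕ V × Mm) ≠ [] := by
    simp only [ne_eq, List.map_eq_nil_iff]
    exact hdne
  -- the embedded history
  have hthist : (OneP g σ).IsHist lt := by
    refine ⟨by simp [hlt], ?_, ?_⟩
    · rw [hlt, List.head?_append_of_ne_nil _ hmapne, List.head?_map, head?_dropLast hlen, hhead]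
      rfl
    · rw [hlt, List.Chain', List.isChain_append]
      refine ⟨?_, List.isChain_singleton _, ?_⟩
      · rw [List.isChain_map]
        exact hchain.dropLast
      · intro x hx y hy
        simp only [List.getLast?_map, Option.mem_def, Option.map_eq_some_iff] at hx
        obtain ⟨u, hu, rfl⟩ := hx
        simp only [List.head?_cons, Option.mem_def, Option.some.injEq] at hy
        subst hy
        have huu : u = l.dropLast.getLast hdne := by
          rw [List.getLast?_eq_getLast hdne] at hu
          exact (Option.some.injEq _ _ ▸ hu).symm ▸ rfl
        show g.edge u v'
        rw [huu, hv', lastV_of_ne g hne]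
        exact edge_dropLast g hne hchain hdne
  set G' : Game (V ⊕ V × Mm) C Bool := (OneP g σ).future lt with hG'
  have hstart : G'.start = Sum.inr (v', M) := by
    show (OneP g σ).lastV lt = _
    rw [hlt, lastV_append _ (by simp)]
    simp [Game.lastV]
  have hdropcol : lt.dropLast.map (OneP g σ).color = l.dropLast.map g.color := by
    rw [hlt, List.dropLast_concat, List.map_map]
    rfl
  -- lifts of forced runs are runs of G'
  have hliftrun : ∀ ρ : ℕ → V, Forced g σ M v' ρ →
      G'.IsRun (fun n => (Sum.inr (ρ n, memRun σ M ρ n) : V ⊕ V × Mm)) := by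
    intro ρ hρ
    obtain ⟨hz, he⟩ := forced_lift g σ hρ
    exact ⟨by rw [hstart]; exact hz, he⟩
  have hrun₀ := hliftrun ρ₀ h₀
  have hrunw := hliftrun ρw hw
  set ρtw : ℕ → V ⊕ V × Mm := fun n => (Sum.inr (ρw n, memRun σ M ρw n) : V ⊕ V × Mm) with hρtw
  -- the witness strategy realizing ρtw
  set sw : List (V ⊕ V × Mm) → V ⊕ V × Mm := fun l' =>
    if l' = (List.range l'.length).map ρtw then ρtw l'.length
    else (G'.serial (G'.lastV l')).choose with hsw
  have hswval : G'.ValidStrat false sw := by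
    intro l'' hl'' _
    by_cases hc : l'' = (List.range l''.length).map ρtw
    · obtain ⟨k, hk⟩ : ∃ k, l''.length = k + 1 := by
        have : l'' ≠ [] := hl''.1
        exact ⟨l''.length - 1, by cases l'' with | nil => exact absurd rfl this | cons a t => simp⟩
      have hsweq : sw l'' = ρtw l''.length := by rw [hsw]; simp only [if_pos hc]
      have hlast : G'.lastV l'' = ρtw k := by
        rw [hc, hk]
        show G'.lastV (histUpTo ρtw k) = ρtw k
        rw [Game.lastV, histUpTo_getLast?]
        rfl
      rw [hsweq, hlast, hk]
      exact hrunw.2 k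
    · have hsweq : sw l'' = (G'.serial (G'.lastV l'')).choose := by rw [hsw]; simp only [if_neg hc]
      rw [hsweq]
      exact (G'.serial (G'.lastV l'')).choose_spec
  have hswwin : G'.Wins1 false (fun n => (Sum.inr (ρ₀ n, memRun σ M ρ₀ n) : V ⊕ V × Mm)) sw := by
    refine ⟨hswval, ?_⟩
    intro ρ' hrun' hcpt'
    have heq : ∀ n, ρ' n = ρtw n := by
      intro n
      induction n using Nat.strong_induction_on with
      | _ n ih =>
        match n with
        | 0 =>
          rw [hrun'.1, hstart, hρtw]
          simp only
          rw [hw.1, memRun_zero]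
        | Nat.succ n =>
          have hcz : ρ' (n + 1) = sw (histUpTo ρ' n) := hcpt' n rfl
          have hmap : histUpTo ρ' n = (List.range (n + 1)).map ρtw := by
            rw [histUpTo]
            exact List.map_congr_left (fun k hk => ih k (by simp [List.mem_range] at hk; omega))
          rw [hcz, hmap, hsw]
          simp
    have hfun : ρ' = ρtw := funext heq
    rw [hfun]
    rw [runPref_OneP g σ lt]
    rw [hdropcol]
    exact hplt
  obtain ⟨s₁, ⟨hv₁, hw₁⟩, hm₁⟩ := H lt hthist _ hrun₀ ⟨sw, hswwin⟩
  obtain ⟨ρh, hρhrun, hρhcpt, hult⟩ := winner_run G' s₁ (fun _ => rfl) hv₁ hm₁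
  have hpref := hw₁ ρh hρhrun hρhcpt
  obtain ⟨hpr, hforced⟩ := run_inr g σ (hρhrun.1.trans hstart) hρhrun.2
  refine ⟨fun k => projP (ρh k), hforced, ?_, ?_⟩
  · obtain ⟨k, p, hp, hkp, hper⟩ := hult
    exact ⟨k, p, hp, hkp, fun n hn => congrArg projP (hper n hn)⟩
  · have hfin := (runPref_OneP g σ lt _ _).1 hpref
    rw [hdropcol] at hfin
    exact hfin

end Prf
namespace Prf

open GG List

variable {V C : Type}

/-- The strategy induced by a strategic update and initial memory. -/
def tOf (g : Game V C Bool) {Mm : Type} (σ' : V × Mm → V × Mm) (M₀' : Mm) :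
    List V → V :=
  fun l' => (σ' (g.lastV l', l'.dropLast.foldl (updF σ') M₀')).1

lemma tOf_concat (g : Game V C Bool) {Mm : Type} (σ' : V × Mm → V × Mm) (M₀' : Mm)
    (l' : List V) (v : V) :
    tOf g σ' M₀' (l' ++ [v]) = (σ' (v, l'.foldl (updF σ') M₀')).1 := by
  rw [tOf, Game.lastV, List.getLast?_concat, List.dropLast_concat]
  rfl

lemma tOf_histUpTo (g : Game V C Bool) {Mm : Type} (σ' : V × Mm → V × Mm) (M₀' : Mm)
    (ρ : ℕ → V) (n : ℕ) :
    tOf g σ' M₀' (histUpTo ρ n) = (σ' (ρ n, memRun σ' M₀' ρ n)).1 := by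
  rw [tOf, Game.lastV, histUpTo_getLast?, histUpTo_dropLast]
  rfl

lemma usesMem_eq_tOf (g : Game V C Bool) {Mm : Type} {σ' : V × Mm → V × Mm} {M₀' : Mm}
    {s : List V → V} (hσ : ∀ (l : List V) (v : V), s (l ++ [v]) = (σ' (v, l.foldl (updF σ') M₀')).1) :
    ∀ l', l' ≠ [] → s l' = tOf g σ' M₀' l' := by
  intro l' h
  conv_lhs => rw [← List.dropLast_append_getLast h]
  conv_rhs => rw [← List.dropLast_append_getLast h]
  rw [hσ, tOf_concat]

/-- Validity of the induced strategy, depending only on the start vertex. -/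
def ValidT (g : Game V C Bool) {Mm : Type} (σ' : V × Mm → V × Mm) (M₀' : Mm) (v : V) : Prop :=
  ∀ l', l' ≠ [] → l'.head? = some v → l'.Chain' g.edge →
    g.owner (g.lastV l') = true → g.edge (g.lastV l') (tOf g σ' M₀' l')

lemma validT_iff (g : Game V C Bool) {Mm : Type} (σ' : V × Mm → V × Mm) (M₀' : Mm)
    (l : List V) :
    ValidT g σ' M₀' (g.lastV l) ↔ (g.future l).ValidStrat true (tOf g σ' M₀') := by
  constructor
  · intro hv l' hl' hown
    obtain ⟨h1, h2, h3⟩ := (future_isHist g l l').1 hl'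
    rw [future_lastV g l h1] at hown ⊢
    exact hv l' h1 h2 h3 hown
  · intro hv l' h1 h2 h3 hown
    have hl' : (g.future l).IsHist l' := (future_isHist g l l').2 ⟨h1, h2, h3⟩
    have := hv l' hl' (by rw [future_lastV g l h1]; exact hown)
    rwa [future_lastV g l h1] at this

lemma validStrat_congr (F : Game V C Bool) {t t' : List V → V}
    (h : ∀ l'', l'' ≠ [] → t l'' = t' l'') (hv : F.ValidStrat true t) :
    F.ValidStrat true t' := by
  intro l' hl' hown
  rw [← h l' hl'.1]
  exact hv l' hl' hown

lemma compat_congr (F : Game V C Bool) {t t' : List V → V}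
    (h : ∀ l'', l'' ≠ [] → t l'' = t' l'') {ρ : ℕ → V} (hc : F.Compat true t' ρ) :
    F.Compat true t ρ := by
  intro n hown
  rw [hc n hown, h _ (histUpTo_ne ρ n)]

/-- A run of the future game compatible with the induced strategy is forced. -/
lemma run_compat_forced_tOf (g : Game V C Bool) {Mm : Type} {σ' : V × Mm → V × Mm}
    {M₀' : Mm} {l : List V} {ρ : ℕ → V} (hr : (g.future l).IsRun ρ)
    (hc : (g.future l).Compat true (tOf g σ' M₀') ρ) :
    Forced g σ' M₀' (g.lastV l) ρ := by
  refine ⟨hr.1, fun n => ⟨fun hown => ?_, fun _ => hr.2 n⟩⟩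
  rw [hc n hown, tOf_histUpTo]

/-- A forced run is a run of the future game compatible with the induced strategy,
provided the induced strategy is valid. -/
lemma forced_run_tOf (g : Game V C Bool) {Mm : Type} {σ' : V × Mm → V × Mm}
    {M₀' : Mm} {l : List V} (hl : g.IsHist l)
    (hv : ValidT g σ' M₀' (g.lastV l)) {ρ : ℕ → V}
    (hf : Forced g σ' M₀' (g.lastV l) ρ) :
    (g.future l).IsRun ρ ∧ (g.future l).Compat true (tOf g σ' M₀') ρ := by
  have hedge : ∀ n, g.edge (ρ n) (ρ (n + 1)) := by
    intro n
    induction n using Nat.strong_induction_on with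
    | _ n ih =>
      cases hov : g.owner (ρ n) with
      | false => exact (hf.2 n).2 hov
      | true =>
        have hchain : (histUpTo ρ n).Chain' g.edge :=
          histUpTo_chain' g.edge ρ n (fun k hk => ih k hk)
        have hlast : g.lastV (histUpTo ρ n) = ρ n := by
          rw [Game.lastV, histUpTo_getLast?]; rfl
        have := hv (histUpTo ρ n) (histUpTo_ne ρ n)
          (by rw [histUpTo_head, hf.1]) hchain (by rw [hlast]; exact hov)
        rw [hlast, tOf_histUpTo] at this
        rwa [← (hf.2 n).1 hov] at this
  refine ⟨⟨hf.1, hedge⟩, fun n hown => ?_⟩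
  rw [tOf_histUpTo]
  exact (hf.2 n).1 hown

/-- The shifted strategy coincides with an induced strategy on nonempty lists. -/
lemma shift_eq_tOf (g : Game V C Bool) {m₀ : ℕ}
    {σ₀ : V × (Fin m₀ → Bool) → V × (Fin m₀ → Bool)} {M₀ : Fin m₀ → Bool}
    {s : List V → V}
    (hσ : ∀ (l : List V) (v : V), s (l ++ [v]) = (σ₀ (v, l.foldl (updF σ₀) M₀)).1)
    (l : List V) :
    ∀ l'', l'' ≠ [] → shiftStrat l s l'' = tOf g σ₀ (l.dropLast.foldl (updF σ₀) M₀) l'' := by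
  intro l'' h
  rw [shiftStrat]
  conv_lhs => rw [← List.dropLast_append_getLast h, ← List.append_assoc]
  rw [hσ, List.foldl_append]
  conv_rhs => rw [← List.dropLast_append_getLast h, tOf_concat]

end Prf
namespace Prf

open GG List

variable {V C : Type}

/-- Central characterization: non-optimality at a history of length ≥ 2 is equivalent
to a condition involving only finitely many ultimately periodic runs determined by
the last vertex and the memory state, together with `plt` comparisons after `h`. -/
lemma char [Fintype V] (g : Game V C Bool) (hswo : SWO (g.pref true))
    {m₀ : ℕ} (σ₀ : V × (Fin m₀ → Bool) → V × (Fin m₀ → Bool)) (M₀ : Fin m₀ → Bool)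
    (s : List V → V) (hs : g.ValidStrat true s)
    (hσ₀ : ∀ (l : List V) (v : V), s (l ++ [v]) = (σ₀ (v, l.foldl (updF σ₀) M₀)).1)
    {m' : ℕ}
    (H2 : ∀ (l : List V), g.IsHist l → ∀ ρ, (g.future l).IsRun ρ →
      (∃ t, (g.future l).Wins1 true ρ t) →
      ∃ t, (g.future l).Wins1 true ρ t ∧ UsesMem m' t)
    (K : ℕ)
    (hK₀ : Fintype.card (V × (Fin m₀ → Bool)) ≤ K)
    (hKA : Fintype.card (V × (Fin m' → Bool)) ≤ K)
    (HT₀ : ∀ {l : List V}, g.IsHist l → 2 ≤ l.length → ∀ (M : Fin m₀ → Bool) (ρ₀ ρw : ℕ → V),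
      Forced g σ₀ M (g.lastV l) ρ₀ → Forced g σ₀ M (g.lastV l) ρw →
      plt g (l.dropLast.map g.color) ρw ρ₀ →
      ∃ ρ', Forced g σ₀ M (g.lastV l) ρ' ∧ UltPerK K ρ' ∧
        plt g (l.dropLast.map g.color) ρ' ρ₀)
    (HTA : ∀ (σ' : V × (Fin m' → Bool) → V × (Fin m' → Bool)),
      ∀ {l : List V}, g.IsHist l → 2 ≤ l.length → ∀ (M : Fin m' → Bool) (ρ₀ ρw : ℕ → V),
      Forced g σ' M (g.lastV l) ρ₀ → Forced g σ' M (g.lastV l) ρw →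
      plt g (l.dropLast.map g.color) ρw ρ₀ →
      ∃ ρ', Forced g σ' M (g.lastV l) ρ' ∧ UltPerK K ρ' ∧
        plt g (l.dropLast.map g.color) ρ' ρ₀)
    {l : List V} (hl : g.IsHist l) (hlen : 2 ≤ l.length) :
    (¬ g.OptimalAt true s l ↔
      ∃ d₁ : (Fin (K + 1) → V) × Fin (K + 1) × Fin (K + 1),
        (Forced g σ₀ (l.dropLast.foldl (updF σ₀) M₀) (g.lastV l) (phiRun K d₁) ∧
          UltPerK K (phiRun K d₁)) ∧
        ∃ j : (V × (Fin m' → Bool) → V × (Fin m' → Bool)) × (Fin m' → Bool),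
          ValidT g j.1 j.2 (g.lastV l) ∧
          ∀ d₂ : (Fin (K + 1) → V) × Fin (K + 1) × Fin (K + 1),
            (Forced g j.1 j.2 (g.lastV l) (phiRun K d₂) ∧ UltPerK K (phiRun K d₂)) →
            plt g (l.dropLast.map g.color) (phiRun K d₁) (phiRun K d₂)) := by
  classical
  obtain ⟨hirr, htr, hntr⟩ := hswo
  set h : List C := l.dropLast.map g.color with hh
  set v' : V := g.lastV l with hv'
  set M' : Fin m₀ → Bool := l.dropLast.foldl (updF σ₀) M₀ with hM'
  -- basic SWO facts for plt
  have pirr : ∀ x, ¬ plt g h x x := fun x => hirr _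
  have ptr : ∀ x y z, plt g h x y → plt g h y z → plt g h x z := fun x y z => htr _ _ _
  have pntr : ∀ x y z, ¬ plt g h x y → ¬ plt g h y z → ¬ plt g h x z := fun x y z => hntr _ _ _
  -- the shifted strategy agrees with tOf g σ₀ M'
  have hsh := shift_eq_tOf g hσ₀ l
  -- validity of tOf σ₀ M' from v'
  have hvT₀ : ValidT g σ₀ M' v' := by
    rw [hv', validT_iff]
    exact validStrat_congr _ (fun l'' h'' => hsh l'' h'') (valid_shift g hs hl)
  -- S side: finiteness and nonemptiness
  set SS : Set (ℕ → V) := {ρ | Forced g σ₀ M' v' ρ ∧ UltPerK K ρ} with hSS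
  have hSSfin : SS.Finite := by
    refine Set.Finite.subset (Set.finite_range (phiRun K)) ?_
    rintro ρ ⟨_, hu⟩
    exact phiRun_surj hu
  have hSSne : SS.Nonempty := by
    obtain ⟨ρc, hf, hu⟩ := starter g σ₀ M' v'
    exact ⟨ρc, hf, hu.mono hK₀⟩
  -- membership in S gives run/compat data
  have hStoRC : ∀ ρ, Forced g σ₀ M' v' ρ →
      (g.future l).IsRun ρ ∧ (g.future l).Compat true (shiftStrat l s) ρ := by
    intro ρ hf
    obtain ⟨hr, hc⟩ := forced_run_tOf g hl (hv' ▸ hvT₀) (hv' ▸ hf)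
    exact ⟨hr, compat_congr _ (fun l'' h'' => hsh l'' h'') hc⟩
  have hRCtoS : ∀ ρ, (g.future l).IsRun ρ → (g.future l).Compat true (shiftStrat l s) ρ →
      Forced g σ₀ M' v' ρ := by
    intro ρ hr hc
    rw [hv']
    refine run_compat_forced_tOf g hr ?_
    intro n hown
    rw [hc n hown, hsh _ (histUpTo_ne ρ n)]
  constructor
  · -- forward direction
    intro hno
    obtain ⟨ρ', hρ'run, hρ'cpt, t, hwt⟩ := (notOpt_iff g ⟨hirr, htr, hntr⟩ hs hl).1 hno
    obtain ⟨t', hwt', hmem'⟩ := H2 l hl ρ' hρ'run ⟨t, hwt⟩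
    obtain ⟨σ', M₀', hσ'⟩ := hmem'
    have htOf : ∀ l'', l'' ≠ [] → t' l'' = tOf g σ' M₀' l'' := usesMem_eq_tOf g hσ'
    have hwinT : (g.future l).Wins1 true ρ' (tOf g σ' M₀') := by
      refine ⟨validStrat_congr _ htOf hwt'.1, ?_⟩
      intro ρ'' h1 h2
      exact hwt'.2 ρ'' h1 (compat_congr _ htOf h2)
    have hvTj : ValidT g σ' M₀' v' := by
      rw [hv', validT_iff]
      exact hwinT.1
    have hρ'forced : Forced g σ₀ M' v' ρ' := hRCtoS ρ' hρ'run hρ'cpt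
    -- minimal element of S
    obtain ⟨ρmin, hρmin, hmin⟩ := exists_minimal (plt g h) pirr ptr SS hSSfin hSSne
    have hnotmin : ¬ plt g h ρ' ρmin := by
      intro hcon
      obtain ⟨ρ₁, hf₁, hu₁, hp₁⟩ := HT₀ hl hlen M' ρmin ρ' (hv' ▸ hρmin.1) (hv' ▸ hρ'forced) hcon
      exact hmin ρ₁ ⟨hv' ▸ hf₁, hu₁⟩ hp₁
    obtain ⟨d₁, hd₁⟩ := phiRun_surj hρmin.2
    refine ⟨d₁, by rw [hd₁]; exact ⟨hρmin.1, hρmin.2⟩, (σ', M₀'), hvTj, ?_⟩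
    intro d₂ ⟨hf₂, hu₂⟩
    set ρ₂ : ℕ → V := phiRun K d₂ with hρ₂
    obtain ⟨hr₂, hc₂⟩ := forced_run_tOf g hl (hv' ▸ hvTj) (hv' ▸ hf₂)
    have hpref₂ : plt g h ρ' ρ₂ := hwinT.2 ρ₂ hr₂ hc₂
    rw [hd₁]
    by_contra hcon
    exact pntr ρ' ρmin ρ₂ hnotmin hcon hpref₂
  · -- backward direction
    rintro ⟨d₁, ⟨hf₁, hu₁⟩, j, hvj, hall⟩
    set ρh : ℕ → V := phiRun K d₁ with hρh
    obtain ⟨hrh, hch⟩ := hStoRC ρh hf₁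
    -- R side
    set RR : Set (ℕ → V) := {ρ | Forced g j.1 j.2 v' ρ ∧ UltPerK K ρ} with hRR
    have hRRfin : RR.Finite := by
      refine Set.Finite.subset (Set.finite_range (phiRun K)) ?_
      rintro ρ ⟨_, hu⟩
      exact phiRun_surj hu
    have hRRne : RR.Nonempty := by
      obtain ⟨ρc, hf, hu⟩ := starter g j.1 j.2 v'
      exact ⟨ρc, hf, hu.mono hKA⟩
    obtain ⟨ρmin, hρmin, hmin⟩ := exists_minimal (plt g h) pirr ptr RR hRRfin hRRne
    obtain ⟨dmin, hdmin⟩ := phiRun_surj hρmin.2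
    have hminplt : plt g h ρh ρmin := by
      have := hall dmin (by rw [hdmin]; exact hρmin)
      rwa [hdmin] at this
    have hwins : (g.future l).Wins1 true ρh (tOf g j.1 j.2) := by
      refine ⟨(validT_iff g j.1 j.2 l).1 (hv' ▸ hvj), ?_⟩
      intro ρ₂ hr₂ hc₂
      show plt g h ρh ρ₂
      by_contra hcon
      have hf₂ : Forced g j.1 j.2 v' ρ₂ := hv' ▸ run_compat_forced_tOf g hr₂ hc₂
      have h₂min : plt g h ρ₂ ρmin := by
        by_contra hcc
        exact pntr ρh ρ₂ ρmin hcon hcc hminplt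
      obtain ⟨ρ₃, hf₃, hu₃, hp₃⟩ := HTA j.1 hl hlen j.2 ρmin ρ₂ (hv' ▸ hρmin.1) (hv' ▸ hf₂) h₂min
      exact hmin ρ₃ ⟨hv' ▸ hf₃, hu₃⟩ hp₃
    exact (notOpt_iff g ⟨hirr, htr, hntr⟩ hs hl).2 ⟨ρh, hrh, hch, tOf g j.1 j.2, hwins⟩

end Prf
namespace Prf

open GG List

variable {V C : Type}

/-- Bundled DFA. -/
structure DFAP (C : Type) where
  Q : Type
  fin : Fintype Q
  step : Q → C → Q
  init : Q
  acc : Set Q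

lemma weakOIR_dfa {prec : (ℕ → C) → (ℕ → C) → Prop} (h3 : WeakOIR prec)
    {p q : ℕ → C} (hp : UltPeriodic p) (hq : UltPeriodic q) :
    ∃ D : DFAP C, ∀ w : List C,
      (w.foldl D.step D.init ∈ D.acc ↔ prec (appSeq w p) (appSeq w q)) := by
  obtain ⟨M, ⟨Q, fin, step, init, acc, hrec⟩, hiff⟩ := h3 p q hp hq
  exact ⟨⟨Q, fin, step, init, acc⟩, fun w =>
    ⟨fun hw => (hiff w).1 ((hrec w).2 hw), fun hw => (hrec w).1 ((hiff w).2 hw)⟩⟩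

/-- Folding invariant for the automaton that tracks data of `l.dropLast`,
the last vertex of `l` and `min (l.length) 2`. -/
lemma foldl_shift {X : Type} (stX : X → V → X) (x₀ : X) :
    ∀ l : List V, l.foldl (fun (q : X × Option V × Fin 3) v =>
        match q.2.1 with
        | none => (q.1, some v, 1)
        | some u => (stX q.1 u, some v, 2)) (x₀, none, 0) =
      (l.dropLast.foldl stX x₀, l.getLast?, (↑(min l.length 2) : Fin 3)) := by
  intro l
  induction l using List.reverseRecOn with
  | nil => simp
  | append_singleton l v ih =>
    rw [List.foldl_append, ih]
    cases hl0 : l with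
    | nil => simp
    | cons a t =>
      have hne : l ≠ [] := by rw [hl0]; simp
      rw [← hl0]
      have hlast : l.getLast? = some (l.getLast hne) := List.getLast?_eq_getLast hne
      rw [hlast]
      show (stX (l.dropLast.foldl stX x₀) (l.getLast hne), some v, (2 : Fin 3)) = _
      rw [List.dropLast_concat, List.getLast?_concat]
      have hfold : l.foldl stX x₀ = stX (l.dropLast.foldl stX x₀) (l.getLast hne) := by
        conv_lhs => rw [← List.dropLast_append_getLast hne]
        rw [List.foldl_append]
        rfl
      rw [← hfold]
      have hlen : ((min (l ++ [v]).length 2 : ℕ) : Fin 3) = (2 : Fin 3) := by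
        have h1 : 1 ≤ l.length := by rw [hl0]; simp
        have h2 : min (l ++ [v]).length 2 = 2 := by simp; omega
        rw [h2]
        rfl
      rw [hlen]

end Prf

namespace Prf

open GG List

variable {V C : Type}

lemma hist_len1 (g : Game V C Bool) {l : List V} (h : g.IsHist l) (hl : l.length = 1) :
    l = [g.start] := by
  match l, hl with
  | [x], _ =>
    have := h.2.1
    simp only [List.head?_cons, Option.some.injEq] at this
    rw [this]

end Prf

/-- Proposition 5.4: weak OIR plus uniform finite-memory conditions imply the
optimality-is-regular property for player `a` (= `true`) in the antagonistic
game `g`; player `b` is `false`. -/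
theorem stmt16
    {V C : Type} [Fintype V]
    (g : GG.Game V C Bool)
    (hswo : ∀ p, GG.SWO (g.pref p))
    (hant : ∀ p q, g.pref false p q ↔ g.pref true q p)
    -- (1) b wins her winnable future threshold games in every one-player game
    -- for b using uniformly finite memory
    (h1 : ∀ (V' : Type) [Fintype V'] (g' : GG.Game V' C Bool),
      (∀ v, g'.owner v = false) → (∀ p q, g'.pref false p q ↔ g.pref true q p) →
      ∃ m, ∀ (l : List V'), g'.IsHist l → ∀ ρ, (g'.future l).IsRun ρ →
        (∃ s, (g'.future l).Wins1 false ρ s) →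
        ∃ s, (g'.future l).Wins1 false ρ s ∧ GG.UsesMem m s)
    -- (2) a wins her winnable future threshold games in g using uniformly finite memory
    (h2 : ∃ m', ∀ (l : List V), g.IsHist l → ∀ ρ, (g.future l).IsRun ρ →
      (∃ s, (g.future l).Wins1 true ρ s) →
      ∃ s, (g.future l).Wins1 true ρ s ∧ GG.UsesMem m' s)
    -- (3) ≺_a has the weak OIR property
    (h3 : GG.WeakOIR (g.pref true)) :
    g.OIR true := by
    classical
  intro s hvs hfm
  obtain ⟨m₀, σ₀, M₀, hσ₀⟩ := hfm
  obtain ⟨m', H2⟩ := h2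
  obtain ⟨m₁, H1₀⟩ := h1 (V ⊕ V × (Fin m₀ → Bool)) (Prf.OneP g σ₀) (fun _ => rfl)
    (fun p q => Iff.rfl)
  have H1A : ∀ σ' : V × (Fin m' → Bool) → V × (Fin m' → Bool),
      ∃ m, ∀ (l : List (V ⊕ V × (Fin m' → Bool))), (Prf.OneP g σ').IsHist l →
        ∀ ρ, ((Prf.OneP g σ').future l).IsRun ρ →
        (∃ t, ((Prf.OneP g σ').future l).Wins1 false ρ t) →
        ∃ t, ((Prf.OneP g σ').future l).Wins1 false ρ t ∧ UsesMem m t :=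
    fun σ' => h1 _ (Prf.OneP g σ') (fun _ => rfl) (fun p q => Iff.rfl)
  haveI : Fintype (V × (Fin m' → Bool) → V × (Fin m' → Bool)) := Fintype.ofFinite _
  set mA : (V × (Fin m' → Bool) → V × (Fin m' → Bool)) → ℕ := fun σ' => (H1A σ').choose
    with hmA
  set KA : ℕ := Finset.univ.sup (fun σ' : V × (Fin m' → Bool) → V × (Fin m' → Bool) =>
    Fintype.card ((V ⊕ V × (Fin m' → Bool)) × (Fin (mA σ') → Bool))) with hKAdef
  set K : ℕ := max (max (Fintype.card ((V ⊕ V × (Fin m₀ → Bool)) × (Fin m₁ → Bool))) KA)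
      (max (Fintype.card (V × (Fin m₀ → Bool))) (Fintype.card (V × (Fin m' → Bool)))) with hK
  have hK₀ : Fintype.card (V × (Fin m₀ → Bool)) ≤ K := by
    rw [hK]
    exact le_trans (le_max_left _ _) (le_max_right _ _)
  have hKA : Fintype.card (V × (Fin m' → Bool)) ≤ K := by
    rw [hK]
    exact le_trans (le_max_right _ _) (le_max_right _ _)
  have HT₀ : ∀ {l : List V}, g.IsHist l → 2 ≤ l.length →
      ∀ (M : Fin m₀ → Bool) (ρ₀ ρw : ℕ → V), Prf.Forced g σ₀ M (g.lastV l) ρ₀ →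
      Prf.Forced g σ₀ M (g.lastV l) ρw → Prf.plt g (l.dropLast.map g.color) ρw ρ₀ →
      ∃ ρ', Prf.Forced g σ₀ M (g.lastV l) ρ' ∧ Prf.UltPerK K ρ' ∧
        Prf.plt g (l.dropLast.map g.color) ρ' ρ₀ := by
    intro l hl hlen M ρ₀ ρw h₀ hw hp
    obtain ⟨ρ', hf, hu, hpl⟩ := Prf.transfer g σ₀ m₁ H1₀ hl hlen M h₀ hw hp
    refine ⟨ρ', hf, hu.mono ?_, hpl⟩
    rw [hK]
    exact le_trans (le_max_left _ _) (le_max_left _ _)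
  have HTA : ∀ (σ' : V × (Fin m' → Bool) → V × (Fin m' → Bool)),
      ∀ {l : List V}, g.IsHist l → 2 ≤ l.length →
      ∀ (M : Fin m' → Bool) (ρ₀ ρw : ℕ → V), Prf.Forced g σ' M (g.lastV l) ρ₀ →
      Prf.Forced g σ' M (g.lastV l) ρw → Prf.plt g (l.dropLast.map g.color) ρw ρ₀ →
      ∃ ρ', Prf.Forced g σ' M (g.lastV l) ρ' ∧ Prf.UltPerK K ρ' ∧
        Prf.plt g (l.dropLast.map g.color) ρ' ρ₀ := by
    intro σ' l hl hlen M ρ₀ ρw h₀ hw hp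
    obtain ⟨ρ', hf, hu, hpl⟩ := Prf.transfer g σ' (mA σ') (H1A σ').choose_spec hl hlen M h₀ hw hp
    refine ⟨ρ', hf, hu.mono ?_, hpl⟩
    rw [hK, hKAdef]
    exact le_trans (Finset.le_sup (f := fun σ' : V × (Fin m' → Bool) → V × (Fin m' → Bool) =>
        Fintype.card ((V ⊕ V × (Fin m' → Bool)) × (Fin (mA σ') → Bool)))
        (Finset.mem_univ σ'))
      (le_trans (le_max_right _ _) (le_max_left _ _))
  have CHAR := fun {l : List V} (hl : g.IsHist l) (hlen : 2 ≤ l.length) =>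
    Prf.char g (hswo true) σ₀ M₀ s hvs hσ₀ H2 K hK₀ hKA @HT₀ HTA hl hlen
  -- DFA family for all pairs of bounded lassos
  have hdfa : ∀ i : ((Fin (K + 1) → V) × Fin (K + 1) × Fin (K + 1)) ×
      ((Fin (K + 1) → V) × Fin (K + 1) × Fin (K + 1)), ∃ D : Prf.DFAP C, ∀ w : List C,
      (w.foldl D.step D.init ∈ D.acc ↔
        g.pref true (appSeq w (Prf.colors g (Prf.phiRun K i.1)))
          (appSeq w (Prf.colors g (Prf.phiRun K i.2)))) :=
    fun i => Prf.weakOIR_dfa h3 (Prf.ultPeriodic_comp g.color (Prf.phiRun_ultPeriodic K i.1))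
      (Prf.ultPeriodic_comp g.color (Prf.phiRun_ultPeriodic K i.2))
  set D := fun i => (hdfa i).choose with hDdef
  have hD : ∀ i w, (w.foldl (D i).step (D i).init ∈ (D i).acc ↔
      g.pref true (appSeq w (Prf.colors g (Prf.phiRun K i.1)))
        (appSeq w (Prf.colors g (Prf.phiRun K i.2)))) := fun i => (hdfa i).choose_spec
  haveI hfinQ : ∀ i, Fintype (D i).Q := fun i => (D i).fin
  haveI : DecidableEq (((Fin (K + 1) → V) × Fin (K + 1) × Fin (K + 1)) ×
      ((Fin (K + 1) → V) × Fin (K + 1) × Fin (K + 1))) := Classical.decEq _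
  set stX : ((∀ i, (D i).Q) × (Fin m₀ → Bool)) → V → ((∀ i, (D i).Q) × (Fin m₀ → Bool)) :=
    fun x v => (fun i => (D i).step (x.1 i) (g.color v), Prf.updF σ₀ x.2 v) with hstX
  set x₀ : (∀ i, (D i).Q) × (Fin m₀ → Bool) := (fun i => (D i).init, M₀) with hx₀
  set stepf : (((∀ i, (D i).Q) × (Fin m₀ → Bool)) × Option V × Fin 3) → V →
      (((∀ i, (D i).Q) × (Fin m₀ → Bool)) × Option V × Fin 3) := fun q v =>
    match q.2.1 with
    | none => (q.1, some v, 1)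
    | some u => (stX q.1 u, some v, 2) with hstepf
  have hfold_stX : ∀ (w : List V) (x : ∀ i, (D i).Q) (M : Fin m₀ → Bool),
      w.foldl stX (x, M) =
        (fun i => (w.map g.color).foldl (D i).step (x i), w.foldl (Prf.updF σ₀) M) := by
    intro w
    induction w with
    | nil => intro x M; rfl
    | cons a t ih =>
      intro x M
      rw [List.foldl_cons]
      have h1 : stX (x, M) a = (fun i => (D i).step (x i) (g.color a), Prf.updF σ₀ M a) := rfl
      rw [h1, ih]
      rfl
  have hinv : ∀ l : List V, l.foldl stepf (x₀, none, 0) =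
      (l.dropLast.foldl stX x₀, l.getLast?, (↑(min l.length 2) : Fin 3)) :=
    Prf.foldl_shift stX x₀
  refine ⟨(((∀ i, (D i).Q) × (Fin m₀ → Bool)) × Option V × Fin 3), inferInstance, stepf,
    (x₀, none, 0),
    {q | ∃ l', g.IsHist l' ∧ g.OptimalAt true s l' ∧ l'.foldl stepf (x₀, none, 0) = q}, ?_⟩
  intro l hlhist
  constructor
  · rintro ⟨l', hl', hopt', heq⟩
    rw [hinv l', hinv l] at heq
    have eX : l'.dropLast.foldl stX x₀ = l.dropLast.foldl stX x₀ := (Prod.ext_iff.1 heq).1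
    have eLast : l'.getLast? = l.getLast? := (Prod.ext_iff.1 (Prod.ext_iff.1 heq).2).1
    have eLen : (↑(min l'.length 2) : Fin 3) = (↑(min l.length 2) : Fin 3) :=
      (Prod.ext_iff.1 (Prod.ext_iff.1 heq).2).2
    have eLenN : min l'.length 2 = min l.length 2 := by
      have hv := congrArg Fin.val eLen
      rw [Fin.val_natCast, Fin.val_natCast] at hv
      omega
    have hl1 : 1 ≤ l.length := by
      cases l with
      | nil => exact absurd rfl hlhist.1
      | cons a t => simp
    have hl1' : 1 ≤ l'.length := by
      cases l' with
      | nil => exact absurd rfl hl'.1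
      | cons a t => simp
    by_cases hone : l.length ≤ 1
    · have hexl : l = [g.start] := Prf.hist_len1 g hlhist (by omega)
      have hexl' : l' = [g.start] := Prf.hist_len1 g hl' (by omega)
      rw [hexl, ← hexl']
      exact hopt'
    · have hlen : 2 ≤ l.length := by omega
      have hlen' : 2 ≤ l'.length := by omega
      have elast : g.lastV l' = g.lastV l := by
        rw [Game.lastV, Game.lastV, eLast]
      rw [hx₀, hfold_stX, hfold_stX] at eX
      have eVec : (fun i => (l'.dropLast.map g.color).foldl (D i).step (D i).init) =
          (fun i => (l.dropLast.map g.color).foldl (D i).step (D i).init) :=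
        (Prod.ext_iff.1 eX).1
      have eMem : l'.dropLast.foldl (Prf.updF σ₀) M₀ = l.dropLast.foldl (Prf.updF σ₀) M₀ :=
        (Prod.ext_iff.1 eX).2
      have hatom : ∀ d₁ d₂ : (Fin (K + 1) → V) × Fin (K + 1) × Fin (K + 1),
          Prf.plt g (l'.dropLast.map g.color) (Prf.phiRun K d₁) (Prf.phiRun K d₂) ↔
          Prf.plt g (l.dropLast.map g.color) (Prf.phiRun K d₁) (Prf.phiRun K d₂) := by
        intro d₁ d₂
        have e := congrFun eVec (d₁, d₂)
        constructor
        · intro hp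
          exact (hD (d₁, d₂) (l.dropLast.map g.color)).1
            (by rw [← e]; exact (hD (d₁, d₂) (l'.dropLast.map g.color)).2 hp)
        · intro hp
          exact (hD (d₁, d₂) (l'.dropLast.map g.color)).1
            (by rw [e]; exact (hD (d₁, d₂) (l.dropLast.map g.color)).2 hp)
      have hch := CHAR hlhist hlen
      have hch' := CHAR hl' hlen'
      rw [elast, eMem] at hch'
      have hiff : ¬ g.OptimalAt true s l' ↔ ¬ g.OptimalAt true s l := by
        rw [hch', hch]
        apply exists_congr; intro d₁
        apply and_congr_right; intro _
        apply exists_congr; intro j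
        apply and_congr_right; intro _
        apply forall_congr'; intro d₂
        exact imp_congr Iff.rfl (hatom d₁ d₂)
      exact (not_iff_not.1 hiff).1 hopt'
  · intro hopt
    exact ⟨l, hlhist, hopt, rfl⟩
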